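/- Let p and q be positive integers. Then the group K_{p,q} is bi-orderable. -/

import Mathlib

/-- `G` is bi-orderable: it admits a strict total order invariant under left and right
multiplication. -/
def IsBiOrderable (G : Type*) [Group G] : Prop :=
  ∃ r : G → G → Prop, IsStrictTotalOrder G r ∧
    ∀ a b g h : G, r g h → r (a * g * b) (a * h * b)

noncomputable section

/-- The matrix `A` with rows `(1, -1/q)` and `(-1/p, 1 + 1/(pq))`. -/
def Amat (p q : ℤ) : Matrix (Fin 2) (Fin 2) ℝ :=
  !![1, -1 / (q : ℝ); -1 / (p : ℝ), 1 + 1 / ((p : ℝ) * (q : ℝ))]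

/-- The inverse of `Amat` (its adjugate; `Amat` has determinant 1). -/
def Bmat (p q : ℤ) : Matrix (Fin 2) (Fin 2) ℝ :=
  !![1 + 1 / ((p : ℝ) * (q : ℝ)), 1 / (q : ℝ); 1 / (p : ℝ), 1]

theorem Amat_mul_Bmat (p q : ℤ) (hp : p ≠ 0) (hq : q ≠ 0) :
    Amat p q * Bmat p q = 1 := by
  have hp' : (p : ℝ) ≠ 0 := Int.cast_ne_zero.mpr hp
  have hq' : (q : ℝ) ≠ 0 := Int.cast_ne_zero.mpr hq
  ext i j
  fin_cases i <;> fin_cases j <;>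
    simp [Amat, Bmat, Matrix.mul_apply, Fin.sum_univ_two, Matrix.one_apply] <;>
    field_simp <;> ring

theorem Bmat_mul_Amat (p q : ℤ) (hp : p ≠ 0) (hq : q ≠ 0) :
    Bmat p q * Amat p q = 1 := by
  have hp' : (p : ℝ) ≠ 0 := Int.cast_ne_zero.mpr hp
  have hq' : (q : ℝ) ≠ 0 := Int.cast_ne_zero.mpr hq
  ext i j
  fin_cases i <;> fin_cases j <;>
    simp [Amat, Bmat, Matrix.mul_apply, Fin.sum_univ_two, Matrix.one_apply] <;>
    field_simp <;> ring

/-- The automorphism of `ℝ²` (written multiplicatively) given by `v ↦ A v`. -/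
def alphaAut (p q : ℤ) (hp : p ≠ 0) (hq : q ≠ 0) :
    MulAut (Multiplicative (Fin 2 → ℝ)) where
  toFun v := Multiplicative.ofAdd ((Amat p q).mulVec v.toAdd)
  invFun v := Multiplicative.ofAdd ((Bmat p q).mulVec v.toAdd)
  left_inv v := by
    change Multiplicative.ofAdd ((Bmat p q).mulVec ((Amat p q).mulVec v.toAdd)) = v
    rw [Matrix.mulVec_mulVec, Bmat_mul_Amat p q hp hq, Matrix.one_mulVec]; rfl
  right_inv v := by
    change Multiplicative.ofAdd ((Amat p q).mulVec ((Bmat p q).mulVec v.toAdd)) = v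
    rw [Matrix.mulVec_mulVec, Amat_mul_Bmat p q hp hq, Matrix.one_mulVec]; rfl
  map_mul' u v := by
    simp only [toAdd_mul, Matrix.mulVec_add, ofAdd_add]

/-- `K_{p,q} = ℝ² ⋊ ℤ`: the semidirect product with underlying set `ℝ² × ℤ` and product
`(v₁, n₁) • (v₂, n₂) = (v₁ + A^{n₁} v₂, n₁ + n₂)` (the element `n : ℤ` acts on `ℝ²` by
the `n`-th power of the automorphism `v ↦ A v`). -/
abbrev Kpq (p q : ℤ) (hp : p ≠ 0) (hq : q ≠ 0) :=
  SemidirectProduct (Multiplicative (Fin 2 → ℝ)) (Multiplicative ℤ)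
    (zpowersHom (MulAut (Multiplicative (Fin 2 → ℝ))) (alphaAut p q hp hq))

/-- Auxiliary linear functional: a left eigenvector pairing for `Amat`. -/
def Pf (p : ℤ) (lam : ℝ) (v : Fin 2 → ℝ) : ℝ :=
  v 0 + (p : ℝ) * (1 - lam) * v 1

lemma Pf_add (p : ℤ) (lam : ℝ) (u v : Fin 2 → ℝ) :
    Pf p lam (u + v) = Pf p lam u + Pf p lam v := by
  simp [Pf]; ring

lemma Pf_A {p q : ℤ} (hp : (p : ℝ) ≠ 0) (hq : (q : ℝ) ≠ 0) {lam : ℝ}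
    (hl : lam ^ 2 - (2 + 1 / ((p : ℝ) * (q : ℝ))) * lam + 1 = 0) (v : Fin 2 → ℝ) :
    Pf p lam ((Amat p q).mulVec v) = lam * Pf p lam v := by
  simp only [Pf, Amat, Matrix.mulVec, dotProduct, Fin.sum_univ_two,
    Matrix.cons_val', Matrix.cons_val_zero, Matrix.cons_val_one, Matrix.head_cons,
    Matrix.empty_val', Matrix.cons_val_fin_one, Matrix.head_fin_const, Matrix.of_apply]
  field_simp
  field_simp at hl
  linear_combination (v 1) * hl

lemma Pf_B {p q : ℤ} (hp : p ≠ 0) (hq : q ≠ 0) {lam : ℝ} (hlam : lam ≠ 0)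
    (hl : lam ^ 2 - (2 + 1 / ((p : ℝ) * (q : ℝ))) * lam + 1 = 0) (v : Fin 2 → ℝ) :
    Pf p lam ((Bmat p q).mulVec v) = lam⁻¹ * Pf p lam v := by
  have hp' : (p : ℝ) ≠ 0 := Int.cast_ne_zero.mpr hp
  have hq' : (q : ℝ) ≠ 0 := Int.cast_ne_zero.mpr hq
  have h1 := Pf_A hp' hq' hl ((Bmat p q).mulVec v)
  rw [Matrix.mulVec_mulVec, Amat_mul_Bmat p q hp hq, Matrix.one_mulVec] at h1
  rw [h1]
  field_simp

lemma Pf_zpow {p q : ℤ} (hp : p ≠ 0) (hq : q ≠ 0) {lam : ℝ} (hlam : lam ≠ 0)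
    (hl : lam ^ 2 - (2 + 1 / ((p : ℝ) * (q : ℝ))) * lam + 1 = 0) (n : ℤ)
    (v : Multiplicative (Fin 2 → ℝ)) :
    Pf p lam (Multiplicative.toAdd ((alphaAut p q hp hq ^ n) v)) =
      lam ^ n * Pf p lam (Multiplicative.toAdd v) := by
  have hp' : (p : ℝ) ≠ 0 := Int.cast_ne_zero.mpr hp
  have hq' : (q : ℝ) ≠ 0 := Int.cast_ne_zero.mpr hq
  have hA : ∀ w : Multiplicative (Fin 2 → ℝ),
      Pf p lam (Multiplicative.toAdd (alphaAut p q hp hq w)) =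
        lam * Pf p lam (Multiplicative.toAdd w) := by
    intro w
    have := Pf_A hp' hq' hl (Multiplicative.toAdd w)
    simpa [alphaAut] using this
  have hB : ∀ w : Multiplicative (Fin 2 → ℝ),
      Pf p lam (Multiplicative.toAdd ((alphaAut p q hp hq)⁻¹ w)) =
        lam⁻¹ * Pf p lam (Multiplicative.toAdd w) := by
    intro w
    have := Pf_B hp hq hlam hl (Multiplicative.toAdd w)
    simpa [alphaAut] using this
  induction n using Int.induction_on generalizing v with
  | zero => simp
  | succ k ih =>
      rw [zpow_add_one, MulAut.mul_apply, ih, hA, zpow_add_one₀ hlam]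
      ring
  | pred k ih =>
      rw [zpow_sub_one, MulAut.mul_apply, ih, hB, zpow_sub_one₀ hlam]
      ring

/-- The key invariant of an element of `Kpq`, valued in `ℤ ×ₗ ℝ ×ₗ ℝ`. -/
def key (p q : ℤ) (hp : p ≠ 0) (hq : q ≠ 0) (l1 l2 : ℝ) (g : Kpq p q hp hq) :
    ℤ ×ₗ ℝ ×ₗ ℝ :=
  toLex (Multiplicative.toAdd g.right,
    toLex (Pf p l1 (Multiplicative.toAdd g.left), Pf p l2 (Multiplicative.toAdd g.left)))

lemma key_injective (p q : ℤ) (hp : p ≠ 0) (hq : q ≠ 0) {l1 l2 : ℝ} (hl : l1 ≠ l2)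
    {g h : Kpq p q hp hq} (e : key p q hp hq l1 l2 g = key p q hp hq l1 l2 h) : g = h := by
  have hp' : (p : ℝ) ≠ 0 := Int.cast_ne_zero.mpr hp
  simp only [key, toLex_inj, Prod.mk.injEq] at e
  obtain ⟨e1, e2, e3⟩ := e
  set u := Multiplicative.toAdd g.left with hu
  set w := Multiplicative.toAdd h.left with hw
  simp only [Pf] at e2 e3
  have h1 : u 1 = w 1 := by
    have hc : (p : ℝ) * (l1 - l2) ≠ 0 := mul_ne_zero hp' (sub_ne_zero.mpr hl)
    have : (p : ℝ) * (l1 - l2) * u 1 = (p : ℝ) * (l1 - l2) * w 1 := by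
      linear_combination e3 - e2
    exact mul_left_cancel₀ hc this
  have h0 : u 0 = w 0 := by
    linear_combination e2 - ((p : ℝ) * (1 - l1)) * h1
  have huw : u = w := by
    funext i; fin_cases i <;> assumption
  ext
  · exact congrFun huw _
  · exact e1

theorem kpq_biOrderable (p q : ℤ) (hp : 0 < p) (hq : 0 < q) :
    IsBiOrderable (Kpq p q hp.ne' hq.ne') := by
  have hp0 : p ≠ 0 := hp.ne'
  have hq0 : q ≠ 0 := hq.ne'
  have hp' : (p : ℝ) ≠ 0 := Int.cast_ne_zero.mpr hp0
  have hq' : (q : ℝ) ≠ 0 := Int.cast_ne_zero.mpr hq0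
  have hppos : (0 : ℝ) < p := by exact_mod_cast hp
  have hqpos : (0 : ℝ) < q := by exact_mod_cast hq
  obtain ⟨t, ht⟩ : ∃ t : ℝ, t = 2 + 1 / ((p : ℝ) * (q : ℝ)) := ⟨_, rfl⟩
  have htgt : 2 < t := by
    have : 0 < 1 / ((p : ℝ) * (q : ℝ)) := by positivity
    linarith
  obtain ⟨d, hd⟩ : ∃ d : ℝ, d = Real.sqrt (t ^ 2 - 4) := ⟨_, rfl⟩
  have ht4 : 0 < t ^ 2 - 4 := by nlinarith
  have hd2 : d ^ 2 = t ^ 2 - 4 := by rw [hd]; exact Real.sq_sqrt ht4.le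
  have hdpos : 0 < d := by rw [hd]; exact Real.sqrt_pos.mpr ht4
  obtain ⟨l1, hl1⟩ : ∃ l : ℝ, l = (t + d) / 2 := ⟨_, rfl⟩
  obtain ⟨l2, hl2⟩ : ∃ l : ℝ, l = (t - d) / 2 := ⟨_, rfl⟩
  have hdlt : d < t := by nlinarith
  have hl1pos : 0 < l1 := by rw [hl1]; linarith
  have hl2pos : 0 < l2 := by rw [hl2]; linarith
  have hlne : l1 ≠ l2 := by rw [hl1, hl2]; intro h; nlinarith [h]
  have hq1 : l1 ^ 2 - t * l1 + 1 = 0 := by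
    rw [hl1]; linear_combination (1 / 4 : ℝ) * hd2
  have hq2 : l2 ^ 2 - t * l2 + 1 = 0 := by
    rw [hl2]; linear_combination (1 / 4 : ℝ) * hd2
  -- abbreviations
  refine ⟨fun g h => key p q hp0 hq0 l1 l2 g < key p q hp0 hq0 l1 l2 h, ?_, ?_⟩
  · exact
      { trichotomous := fun g h => by
          intro n1 n2
          rcases lt_trichotomy (key p q hp0 hq0 l1 l2 g) (key p q hp0 hq0 l1 l2 h) with
            h1 | h1 | h1
          · exact absurd h1 n1
          · exact key_injective p q hp0 hq0 hlne h1
          · exact absurd h1 n2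
        irrefl := fun g => lt_irrefl _
        trans := fun a b c => lt_trans }
  · intro a b g h hr
    -- unfold key and the lex order
    have hmulR : ∀ x y : Kpq p q hp0 hq0, Multiplicative.toAdd (x * y).right =
        Multiplicative.toAdd x.right + Multiplicative.toAdd y.right := fun x y => rfl
    have hmulL : ∀ (lam : ℝ), lam ≠ 0 → lam ^ 2 - t * lam + 1 = 0 →
        ∀ x y : Kpq p q hp0 hq0, Pf p lam (Multiplicative.toAdd (x * y).left) =
          Pf p lam (Multiplicative.toAdd x.left) +
            lam ^ (Multiplicative.toAdd x.right) *
              Pf p lam (Multiplicative.toAdd y.left) := by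
      intro lam hlam hquad x y
      have : Multiplicative.toAdd (x * y).left =
          Multiplicative.toAdd x.left +
            Multiplicative.toAdd
              ((alphaAut p q hp0 hq0 ^ (Multiplicative.toAdd x.right)) y.left) := rfl
      rw [this, Pf_add, Pf_zpow hp0 hq0 hlam (by rw [← ht]; exact hquad)]
    simp only [key, Prod.Lex.lt_iff, ofLex_toLex] at hr ⊢
    rcases hr with h1 | ⟨h1, h2⟩
    · left
      rw [hmulR, hmulR, hmulR, hmulR]
      omega
    · right
      constructor
      · rw [hmulR, hmulR, hmulR, hmulR]
        omega
      · have hA1 := hmulL l1 hl1pos.ne' hq1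
        have hA2 := hmulL l2 hl2pos.ne' hq2
        have e1 : Pf p l1 (Multiplicative.toAdd (a * g * b).left) =
            Pf p l1 (Multiplicative.toAdd a.left) +
              l1 ^ (Multiplicative.toAdd a.right) *
                (Pf p l1 (Multiplicative.toAdd g.left) +
                  l1 ^ (Multiplicative.toAdd g.right) *
                    Pf p l1 (Multiplicative.toAdd b.left)) := by
          rw [mul_assoc, hA1, hA1]
        have e1' : Pf p l1 (Multiplicative.toAdd (a * h * b).left) =
            Pf p l1 (Multiplicative.toAdd a.left) +
              l1 ^ (Multiplicative.toAdd a.right) *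
                (Pf p l1 (Multiplicative.toAdd h.left) +
                  l1 ^ (Multiplicative.toAdd h.right) *
                    Pf p l1 (Multiplicative.toAdd b.left)) := by
          rw [mul_assoc, hA1, hA1]
        have e2 : Pf p l2 (Multiplicative.toAdd (a * g * b).left) =
            Pf p l2 (Multiplicative.toAdd a.left) +
              l2 ^ (Multiplicative.toAdd a.right) *
                (Pf p l2 (Multiplicative.toAdd g.left) +
                  l2 ^ (Multiplicative.toAdd g.right) *
                    Pf p l2 (Multiplicative.toAdd b.left)) := by
          rw [mul_assoc, hA2, hA2]
        have e2' : Pf p l2 (Multiplicative.toAdd (a * h * b).left) =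
            Pf p l2 (Multiplicative.toAdd a.left) +
              l2 ^ (Multiplicative.toAdd a.right) *
                (Pf p l2 (Multiplicative.toAdd h.left) +
                  l2 ^ (Multiplicative.toAdd h.right) *
                    Pf p l2 (Multiplicative.toAdd b.left)) := by
          rw [mul_assoc, hA2, hA2]
        have hgr : g.right = h.right := Multiplicative.toAdd.injective h1
        have hz1 : (0 : ℝ) < l1 ^ (Multiplicative.toAdd a.right) := zpow_pos hl1pos _
        have hz2 : (0 : ℝ) < l2 ^ (Multiplicative.toAdd a.right) := zpow_pos hl2pos _
        rcases h2 with h2 | ⟨h2, h3⟩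
        · left
          rw [e1, e1', hgr]
          have := (mul_lt_mul_iff_right₀ hz1).mpr h2
          nlinarith [this]
        · right
          constructor
          · rw [e1, e1', hgr, h2]
          · rw [e2, e2', hgr]
            have := (mul_lt_mul_iff_right₀ hz2).mpr h3
            nlinarith [this]

end
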